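/- Let f₀, f₁ be forecasting strategies whose induced measures P₀^f, P₁^f on Ω^∞ are mutually singular (there is a measurable set A with P₀^f(A) = 1 and P₁^f(A) = 0). If T is a reasonable comparison test, then P_i^f({T(·,f) = i}) = 1 for each i ∈ {0,1}. -/

import Mathlib

open MeasureTheory Filter Set
open scoped ENNReal

abbrev BinSeq := ℕ → Bool

/-- The cylinder set of all sequences sharing the first `t` coordinates with `ω`. -/
def cyl (ω : BinSeq) (t : ℕ) : Set BinSeq := {ω' | ∀ s < t, ω' s = ω s}

/-- A forecasting strategy: it maps a finite history of (outcome, forecast of expert 0,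
forecast of expert 1) triples to a probability (of the outcome `true`) in `[0,1]`. -/
structure Strategy where
  f : List (Bool × ℝ≥0∞ × ℝ≥0∞) → ℝ≥0∞
  le_one : ∀ h, f h ≤ 1

/-- The probability that a forecast `p` (probability of `true`) assigns to outcome `b`. -/
noncomputable def fprob (p : ℝ≥0∞) (b : Bool) : ℝ≥0∞ := if b then p else 1 - p

/-- The play-path history of length `n` induced by the realization `ω` and the ordered
pair of forecasting strategies `(f₀, f₁)`. -/
def hist (ω : BinSeq) (f₀ f₁ : Strategy) : ℕ → List (Bool × ℝ≥0∞ × ℝ≥0∞)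
  | 0 => []
  | n + 1 =>
      hist ω f₀ f₁ n ++ [(ω n, f₀.f (hist ω f₀ f₁ n), f₁.f (hist ω f₀ f₁ n))]

/-- The infinite play path induced by `(ω, f₀, f₁)`. -/
def play (ω : BinSeq) (f₀ f₁ : Strategy) (n : ℕ) : Bool × ℝ≥0∞ × ℝ≥0∞ :=
  (ω n, f₀.f (hist ω f₀ f₁ n), f₁.f (hist ω f₀ f₁ n))

/-- `P₀` and `P₁` are the pair of probability measures induced by the ordered pair of
forecasting strategies `(f₀, f₁)`: on each cylinder they are the product of the
corresponding one-step-ahead forecasts along the play path. -/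
def Induces (f₀ f₁ : Strategy) (P₀ P₁ : Measure BinSeq) : Prop :=
  IsProbabilityMeasure P₀ ∧ IsProbabilityMeasure P₁ ∧
  (∀ ω t, P₀ (cyl ω t) = ∏ n ∈ Finset.range t, fprob (f₀.f (hist ω f₀ f₁ n)) (ω n)) ∧
  (∀ ω t, P₁ (cyl ω t) = ∏ n ∈ Finset.range t, fprob (f₁.f (hist ω f₀ f₁ n)) (ω n))

/-- A comparison test: given a realization and an ordered pair of forecasting
strategies, it outputs a verdict (intended values: `0`, `1/2`, `1`). -/
abbrev Test := BinSeq → Strategy → Strategy → ℝ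

/-- The test takes only the values `0`, `1/2`, `1`. -/
def TestValued (T : Test) : Prop := ∀ ω f₀ f₁, T ω f₀ f₁ = 0 ∨ T ω f₀ f₁ = 1/2 ∨ T ω f₀ f₁ = 1

/-- Anonymity: the verdict does not depend on the identity of the experts. -/
def Anonymous (T : Test) : Prop := ∀ ω f₀ f₁, T ω f₀ f₁ = 1 - T ω f₁ f₀

/-- Non-counterfactual: the verdict depends only on the realized play path. -/
def NonCounterfactual (T : Test) : Prop :=
  ∃ T' : (ℕ → Bool × ℝ≥0∞ × ℝ≥0∞) → ℝ, ∀ ω f₀ f₁, T ω f₀ f₁ = T' (play ω f₀ f₁)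

/-- Reasonableness: for every pair of strategies with induced measures `(P₀, P₁)` and
every measurable set that one of the induced measures deems positive while the other
deems null, with positive probability the test points at the corresponding expert. -/
def Reasonable (T : Test) : Prop :=
  ∀ f₀ f₁ : Strategy, ∀ P₀ P₁ : Measure BinSeq, Induces f₀ f₁ P₀ P₁ →
    ∀ A : Set BinSeq, MeasurableSet A →
      ((0 < P₀ A ∧ P₁ A = 0) → 0 < P₀ (A ∩ {ω | T ω f₀ f₁ = 0})) ∧
      ((0 < P₁ A ∧ P₀ A = 0) → 0 < P₁ (A ∩ {ω | T ω f₀ f₁ = 1}))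

/-- If the induced measures of two forecasting strategies are mutually singular, then a
reasonable test identifies each expert with probability one under his own measure. -/
theorem reasonable_of_mutually_singular (T : Test) (hT : Reasonable T)
    (f₀ f₁ : Strategy) (P₀ P₁ : Measure BinSeq) (hInd : Induces f₀ f₁ P₀ P₁)
    (hsing : ∃ A : Set BinSeq, MeasurableSet A ∧ P₀ A = 1 ∧ P₁ A = 0) :
    P₀ {ω | T ω f₀ f₁ = 0} = 1 ∧ P₁ {ω | T ω f₀ f₁ = 1} = 1 := by
  obtain ⟨A, hA, hA0, hA1⟩ := hsing
  haveI hP0 : IsProbabilityMeasure P₀ := hInd.1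
  haveI hP1 : IsProbabilityMeasure P₁ := hInd.2.1
  have hAc0 : P₀ Aᶜ = 0 := (prob_compl_eq_zero_iff hA).mpr hA0
  have hAc1 : P₁ Aᶜ = 1 := (prob_compl_eq_one_iff hA).mpr hA1
  constructor
  · set S := {ω | T ω f₀ f₁ = 0} with hS
    set U := toMeasurable P₀ S with hU
    have hsub : S ⊆ U := subset_toMeasurable _ _
    have hUm : MeasurableSet U := measurableSet_toMeasurable _ _
    have hC : P₀ (Uᶜ ∩ A) = 0 := by
      by_contra h
      have hpos : 0 < P₀ (Uᶜ ∩ A) := pos_iff_ne_zero.mpr h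
      have h1 : P₁ (Uᶜ ∩ A) = 0 := measure_mono_null inter_subset_right hA1
      have hres := (hT f₀ f₁ P₀ P₁ hInd (Uᶜ ∩ A) (hUm.compl.inter hA)).1 ⟨hpos, h1⟩
      have hempty : (Uᶜ ∩ A) ∩ S = ∅ := by
        ext ω
        simp only [mem_inter_iff, mem_compl_iff, mem_empty_iff_false, iff_false, not_and]
        intro h1 h3
        exact h1.1 (hsub h3)
      rw [hempty] at hres
      simp at hres
    have hUc : P₀ Uᶜ = 0 := by
      have : P₀ Uᶜ ≤ P₀ (Uᶜ ∩ A) + P₀ (Uᶜ ∩ Aᶜ) := by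
        rw [← measure_inter_add_diff Uᶜ hA]
        simp [Set.diff_eq]
      have h2 : P₀ (Uᶜ ∩ Aᶜ) = 0 := measure_mono_null inter_subset_right hAc0
      simpa [hC, h2] using this
    have : P₀ S = P₀ U := (measure_toMeasurable S).symm
    rw [this, ← prob_compl_eq_zero_iff hUm]
    exact hUc
  · set S := {ω | T ω f₀ f₁ = 1} with hS
    set U := toMeasurable P₁ S with hU
    have hsub : S ⊆ U := subset_toMeasurable _ _
    have hUm : MeasurableSet U := measurableSet_toMeasurable _ _
    have hC : P₁ (Uᶜ ∩ Aᶜ) = 0 := by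
      by_contra h
      have hpos : 0 < P₁ (Uᶜ ∩ Aᶜ) := pos_iff_ne_zero.mpr h
      have h0 : P₀ (Uᶜ ∩ Aᶜ) = 0 := measure_mono_null inter_subset_right hAc0
      have hres := (hT f₀ f₁ P₀ P₁ hInd (Uᶜ ∩ Aᶜ) (hUm.compl.inter hA.compl)).2 ⟨hpos, h0⟩
      have hempty : (Uᶜ ∩ Aᶜ) ∩ S = ∅ := by
        ext ω
        simp only [mem_inter_iff, mem_compl_iff, mem_empty_iff_false, iff_false, not_and]
        intro h1 h3
        exact h1.1 (hsub h3)
      rw [hempty] at hres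
      simp at hres
    have hUc : P₁ Uᶜ = 0 := by
      have : P₁ Uᶜ ≤ P₁ (Uᶜ ∩ Aᶜ) + P₁ (Uᶜ ∩ A) := by
        rw [← measure_inter_add_diff Uᶜ hA.compl]
        simp [Set.diff_eq]
      have h2 : P₁ (Uᶜ ∩ A) = 0 := measure_mono_null inter_subset_right hA1
      simpa [hC, h2] using this
    have : P₁ S = P₁ U := (measure_toMeasurable S).symm
    rw [this, ← prob_compl_eq_zero_iff hUm]
    exact hUc
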